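/- Every twisted automorphism of a group G is an automorphism of G. -/

import Mathlib

/-- Every twisted automorphism of a group is an automorphism. -/
theorem group_taut_is_aut {G : Type*} [Group G] (h : Equiv.Perm G)
    (hT : ∀ x y : G, y ≠ 1 → h (x * y) = (h x⁻¹)⁻¹ * h y) :
    ∀ x y : G, h (x * y) = h x * h y := by
  -- key lemma: if x * y ≠ 1 then h (x * y) = h x * h y
  have hmul : ∀ x y : G, x * y ≠ 1 → h (x * y) = h x * h y := by
    intro x y hxy
    have e1 := hT x⁻¹ (x * y) hxy
    simp only [inv_inv, inv_mul_cancel_left] at e1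
    rw [e1, mul_inv_cancel_left]
  intro x y
  by_cases htriv : ∀ z : G, z = 1
  · rw [htriv (x * y), htriv x, htriv y, htriv (h 1), one_mul]
  push_neg at htriv
  obtain ⟨a, ha⟩ := htriv
  have h1 : h 1 = 1 := by
    have e := hT 1 a ha
    simp only [one_mul, inv_one] at e
    have : (h 1)⁻¹ = 1 := by
      have := mul_right_cancel (b := h a) (a := (h 1)⁻¹) (c := 1)
      exact this (by rw [one_mul, ← e])
    simpa using (inv_eq_one.mp this)
  by_cases hxy : x * y = 1
  · rw [hxy, h1]
    have hyx : y = x⁻¹ := eq_inv_of_mul_eq_one_right hxy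
    subst hyx
    by_cases hx1 : x = 1
    · subst hx1; simp [h1]
    by_cases hz : ∃ z : G, z ≠ 1 ∧ z ≠ x
    · obtain ⟨z, hz1, hzx⟩ := hz
      have e1 : h z = h x * h (x⁻¹ * z) := by
        have := hmul x (x⁻¹ * z) (by simpa using hz1)
        rwa [mul_inv_cancel_left] at this
      have e2 : h (x⁻¹ * z) = h x⁻¹ * h z := by
        apply hmul
        intro hc
        exact hzx (by rw [← inv_inv x, ← inv_mul_eq_one.mp hc]; simp)
      rw [e2, ← mul_assoc] at e1
      exact (right_eq_mul.mp e1).symm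
    · push_neg at hz
      have hxinv : x⁻¹ = x := hz x⁻¹ (inv_ne_one.mpr hx1)
      have hhx : h x = x := by
        rcases eq_or_ne (h x) 1 with he | he
        · exact absurd (h.injective (he.trans h1.symm)) hx1
        · exact hz (h x) he
      rw [hxinv, hhx]
      nth_rewrite 2 [← hxinv]
      simp
  · exact hmul x y hxy
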